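/- If p_0 and p_1 are both even, then ℝP(p_0, p_1) is not reconstructible: for every axis projection c_{01} induced by (z_0,z_1) ↦ (z_0^a, z_1^b) with p_0 a = p_1 b, there exist z, z' ∈ ℝ^2 with all coordinates nonzero such that (z_0^a, z_1^b) ∼_{(1,1)} ((z'_0)^a, (z'_1)^b) but z is not ∼_{(p_0,p_1)}-equivalent to z'. -/

import Mathlib

/-- If `p₀` and `p₁` are both even, `ℝP(p₀,p₁)` is not reconstructible: for any
axis projection `(z₀,z₁) ↦ (z₀^a, z₁^b)` with `p₀ a = p₁ b`, there are points
with all coordinates nonzero, whose images are `∼_{(1,1)}`-equivalent but which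
are not `∼_{(p₀,p₁)}`-equivalent. -/
theorem not_reconstructible_both_even (p₀ p₁ a b : ℕ)
    (hp₀ : 0 < p₀) (hp₁ : 0 < p₁) (ha : 0 < a) (hb : 0 < b)
    (he₀ : Even p₀) (he₁ : Even p₁) (hab : p₀ * a = p₁ * b) :
    ∃ z₀ z₁ z₀' z₁' : ℝ, z₀ ≠ 0 ∧ z₁ ≠ 0 ∧ z₀' ≠ 0 ∧ z₁' ≠ 0 ∧
      (∃ l : ℝ, l ≠ 0 ∧ z₀' ^ a = l * z₀ ^ a ∧ z₁' ^ b = l * z₁ ^ b) ∧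
      ¬ ∃ l : ℝ, l ≠ 0 ∧ z₀' = l ^ p₀ * z₀ ∧ z₁' = l ^ p₁ * z₁ := by
  by_cases hA : Even a
  · refine ⟨1, 1, -1, 1, one_ne_zero, one_ne_zero, by norm_num, one_ne_zero,
      ⟨1, one_ne_zero, by simp [hA.neg_one_pow], by simp⟩, ?_⟩
    rintro ⟨l, hl, h0, -⟩
    have : (0:ℝ) < l ^ p₀ := he₀.pow_pos hl
    nlinarith
  · by_cases hB : Even b
    · refine ⟨1, 1, 1, -1, one_ne_zero, one_ne_zero, one_ne_zero, by norm_num,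
        ⟨1, one_ne_zero, by simp, by simp [hB.neg_one_pow]⟩, ?_⟩
      rintro ⟨l, hl, -, h1⟩
      have : (0:ℝ) < l ^ p₁ := he₁.pow_pos hl
      nlinarith
    · refine ⟨1, 1, -1, -1, one_ne_zero, one_ne_zero, by norm_num, by norm_num,
        ⟨-1, by norm_num, by simp [(Nat.not_even_iff_odd.mp hA).neg_one_pow],
          by simp [(Nat.not_even_iff_odd.mp hB).neg_one_pow]⟩, ?_⟩
      rintro ⟨l, hl, h0, -⟩
      have : (0:ℝ) < l ^ p₀ := he₀.pow_pos hl
      nlinarith
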